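/- Fix d ≥ 1, γ ∈ (0,1], σ > 0 and f ∈ ℝ^d. Let q₀ be a probability density on ℝ^d satisfying q₀(y₀) ≤ c₁ exp(−c₂ ‖y₀‖²/2) for all y₀ (constants c₁, c₂ > 0), and define the diffused conditional density q(y) = (σ^d (2π)^{d/2})^{-1} ∫_{ℝ^d} q₀(y₀) exp( −‖ y − γ y₀ − (1−γ) f ‖² / (2σ²) ) dy₀ (q is then strictly positive and differentiable, with ∂_i q(y) obtained by differentiating under the integral sign). Fix y ∈ ℝ^d, ε_low > 0 and a truncation radius ρ > 0, and suppose: (i) q(y) ≥ ε_low, and (ii) for each i ∈ {1,…,d}, ∫_{‖y₀‖_∞ > ρ} ( | y_i − γ y_{0,i} − (1−γ) f_i | / σ² ) · q₀(y₀) · (σ^d (2π)^{d/2})^{-1} exp( −‖ y − γ y₀ − (1−γ) f ‖² / (2σ²) ) dy₀ ≤ ε_low. Then ‖ ∇ log q(y) ‖_∞ ≤ ( ‖y‖_∞ + γ ρ + (1−γ) ‖f‖_∞ ) / σ² + 1. -/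

import Mathlib

open MeasureTheory

/-- Supremum norm on `ℝ^d` (viewed as Euclidean space). -/
noncomputable def supNorm {d : ℕ} (v : EuclideanSpace ℝ (Fin d)) : ℝ := ⨆ i, |v i|

lemma abs_coord_le_norm {d : ℕ} (v : EuclideanSpace ℝ (Fin d)) (i : Fin d) : |v i| ≤ ‖v‖ := by
  rw [EuclideanSpace.norm_eq, show |v i| = Real.sqrt ((v i) ^ 2) from (Real.sqrt_sq_eq_abs _).symm]
  apply Real.sqrt_le_sqrt
  have := Finset.single_le_sum (f := fun j => ‖v j‖ ^ 2) (fun j _ => sq_nonneg _)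
    (Finset.mem_univ i)
  simpa [Real.norm_eq_abs, sq_abs] using this

lemma gaussInt {d : ℕ} {b : ℝ} (hb : 0 < b) :
    Integrable (fun v : EuclideanSpace ℝ (Fin d) => Real.exp (-(b * ‖v‖ ^ 2))) := by
  have h := (GaussianFourier.integrable_cexp_neg_mul_sq_norm_add (V := EuclideanSpace ℝ (Fin d))
      (b := (b : ℂ)) (by simpa using hb) 0 (0 : EuclideanSpace ℝ (Fin d))).norm
  refine h.congr (Filter.Eventually.of_forall fun v => ?_)
  dsimp only
  rw [Complex.norm_exp]
  congr 1
  simp only [zero_mul, add_zero, neg_mul, Complex.neg_re, Complex.mul_re,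
    Complex.ofReal_re, Complex.ofReal_im, Complex.ofReal_pow]
  norm_cast
  ring

lemma t_exp_bound {α t : ℝ} (hα : 0 < α) (ht : 0 ≤ t) :
    t * Real.exp (-(α * t ^ 2)) ≤ (Real.sqrt α)⁻¹ := by
  have hs : 0 < Real.sqrt α := Real.sqrt_pos.2 hα
  have hs2 : Real.sqrt α ^ 2 = α := Real.sq_sqrt hα.le
  have he : Real.exp (-(α * t ^ 2)) ≤ (1 + α * t ^ 2)⁻¹ := by
    rw [Real.exp_neg]
    apply inv_anti₀ (by positivity)
    have := Real.add_one_le_exp (α * t ^ 2)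
    linarith
  calc t * Real.exp (-(α * t ^ 2)) ≤ t * (1 + α * t ^ 2)⁻¹ :=
        mul_le_mul_of_nonneg_left he ht
    _ ≤ (Real.sqrt α)⁻¹ := by
        rw [← div_eq_mul_inv, inv_eq_one_div, div_le_div_iff₀ (by positivity) hs]
        nlinarith [sq_nonneg (Real.sqrt α * t - 1)]

set_option maxHeartbeats 1600000 in
/-- Lemma 3 of the paper: bound on the conditional score function `∇ log q(y | f_φ(x))`,
under the data-domain truncation (radius `ρ`) and conditional-density truncation
(threshold `ε_low`) hypotheses. The gradient of the diffused density is obtained by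
differentiating under the integral sign. -/
theorem conditional_score_bound
    (d : ℕ) (hd : 1 ≤ d) (γ σ : ℝ) (hγ : γ ∈ Set.Ioc (0:ℝ) 1) (hσ : 0 < σ)
    (f : EuclideanSpace ℝ (Fin d))
    (q₀ : EuclideanSpace ℝ (Fin d) → ℝ)
    (hq₀m : Measurable q₀) (hq₀nn : ∀ y₀, 0 ≤ q₀ y₀)
    (hq₀dens : ∫ y₀, q₀ y₀ = 1)
    (c₁ c₂ : ℝ) (hc₁ : 0 < c₁) (hc₂ : 0 < c₂)
    (htail : ∀ y₀, q₀ y₀ ≤ c₁ * Real.exp (-c₂ * ‖y₀‖ ^ 2 / 2))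
    (q : EuclideanSpace ℝ (Fin d) → ℝ)
    (hq : ∀ z, q z = (σ ^ d * (2 * Real.pi) ^ ((d : ℝ) / 2))⁻¹ *
        ∫ y₀, q₀ y₀ * Real.exp (-‖z - γ • y₀ - (1 - γ) • f‖ ^ 2 / (2 * σ ^ 2)))
    (hqpos : ∀ z, 0 < q z)
    (y : EuclideanSpace ℝ (Fin d)) (εlow ρ : ℝ) (hεlow : 0 < εlow) (hρ : 0 < ρ)
    -- (i) the diffused density at `y` is at least `ε_low`
    (hqge : εlow ≤ q y)
    -- (ii) the score-weighted truncation error outside the cube `‖y₀‖_∞ ≤ ρ` is at most `ε_low`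
    (htrunc : ∀ i : Fin d,
      (∫ y₀ in {y₀ : EuclideanSpace ℝ (Fin d) | ρ < supNorm y₀},
          (|y i - γ * y₀ i - (1 - γ) * f i| / σ ^ 2) * q₀ y₀ *
            ((σ ^ d * (2 * Real.pi) ^ ((d : ℝ) / 2))⁻¹ *
              Real.exp (-‖y - γ • y₀ - (1 - γ) • f‖ ^ 2 / (2 * σ ^ 2))))
        ≤ εlow)
    -- the gradient of `q` at `y`, given by differentiating under the integral sign
    (g : EuclideanSpace ℝ (Fin d)) (hgrad : HasGradientAt q g y)
    (hgi : ∀ i : Fin d, g i =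
      -((σ ^ d * (2 * Real.pi) ^ ((d : ℝ) / 2))⁻¹ *
        ∫ y₀, ((y i - γ * y₀ i - (1 - γ) * f i) / σ ^ 2) * q₀ y₀ *
          Real.exp (-‖y - γ • y₀ - (1 - γ) • f‖ ^ 2 / (2 * σ ^ 2)))) :
    ∀ i : Fin d, |g i / q y| ≤ (supNorm y + γ * ρ + (1 - γ) * supNorm f) / σ ^ 2 + 1 := by
  obtain ⟨hγ0, hγ1⟩ := hγ
  intro i
  set C : ℝ := (σ ^ d * (2 * Real.pi) ^ ((d : ℝ) / 2))⁻¹ with hCdef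
  have hC : 0 < C := by
    rw [hCdef]
    have h1 : (0:ℝ) < σ ^ d := pow_pos hσ d
    have h2 : (0:ℝ) < (2 * Real.pi) ^ ((d : ℝ) / 2) :=
      Real.rpow_pos_of_pos (by positivity) _
    positivity
  set E : EuclideanSpace ℝ (Fin d) → ℝ :=
    fun y₀ => Real.exp (-‖y - γ • y₀ - (1 - γ) • f‖ ^ 2 / (2 * σ ^ 2)) with hEdef
  set F : EuclideanSpace ℝ (Fin d) → ℝ :=
    fun y₀ => ((y i - γ * y₀ i - (1 - γ) * f i) / σ ^ 2) * q₀ y₀ * E y₀ with hFdef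
  set G : EuclideanSpace ℝ (Fin d) → ℝ := fun y₀ => q₀ y₀ * E y₀ with hGdef
  have hσ2 : (0:ℝ) < σ ^ 2 := by positivity
  have hEpos : ∀ x, 0 < E x := fun x => Real.exp_pos _
  have hEle1 : ∀ x, E x ≤ 1 := by
    intro x
    rw [hEdef]
    apply Real.exp_le_one_iff.2
    have : 0 ≤ ‖y - γ • x - (1 - γ) • f‖ ^ 2 := sq_nonneg _
    have : 0 < 2 * σ ^ 2 := by positivity
    apply div_nonpos_of_nonpos_of_nonneg <;> [linarith; linarith]
  have hGnn : ∀ x, 0 ≤ G x := fun x => mul_nonneg (hq₀nn x) (hEpos x).le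
  -- measurability
  have hcoord : ∀ j : Fin d,
      Measurable fun v : EuclideanSpace ℝ (Fin d) => v j :=
    fun j => (EuclideanSpace.proj (𝕜 := ℝ) j).continuous.measurable
  have hEc : Continuous E := by
    rw [hEdef]
    have hcont : Continuous fun y₀ : EuclideanSpace ℝ (Fin d) => y - γ • y₀ - (1 - γ) • f :=
      (continuous_const.sub (continuous_id.const_smul γ)).sub continuous_const
    exact Real.continuous_exp.comp ((hcont.norm.pow 2).neg.div_const _)
  have hFm : AEStronglyMeasurable F volume := by
    rw [hFdef]
    exact ((((measurable_const.sub ((hcoord i).const_mul γ)).sub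
      measurable_const).div_const _).mul hq₀m).mul hEc.measurable |>.aestronglyMeasurable
  have hGm : AEStronglyMeasurable G volume := by
    rw [hGdef]
    exact (hq₀m.mul hEc.measurable).aestronglyMeasurable
  -- integrability of G
  have hGint : Integrable G := by
    refine Integrable.mono' ((gaussInt (half_pos hc₂)).const_mul c₁) hGm
      (Filter.Eventually.of_forall fun x => ?_)
    rw [Real.norm_eq_abs, abs_of_nonneg (hGnn x)]
    calc G x ≤ (c₁ * Real.exp (-c₂ * ‖x‖ ^ 2 / 2)) * 1 :=
          mul_le_mul (htail x) (hEle1 x) (hEpos x).le (by positivity)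
      _ = c₁ * Real.exp (-(c₂ / 2 * ‖x‖ ^ 2)) := by rw [mul_one]; congr 2; ring
  -- the absolute value of F pointwise
  have habsF : ∀ x, |F x| =
      (|y i - γ * x i - (1 - γ) * f i| / σ ^ 2) * q₀ x * E x := by
    intro x
    rw [hFdef]
    simp only
    rw [abs_mul, abs_mul, abs_div, abs_of_pos hσ2, abs_of_nonneg (hq₀nn x),
      abs_of_pos (hEpos x)]
  -- integrability of F
  have halpha : (0:ℝ) < c₂ / 4 := by positivity
  set α : ℝ := c₂ / 4 with hαdef
  set B : ℝ := (Real.sqrt α)⁻¹ with hBdef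
  have hB0 : 0 ≤ B := by rw [hBdef]; positivity
  set a : ℝ := |y i| + (1 - γ) * |f i| with hadef
  have ha0 : 0 ≤ a := by
    rw [hadef]
    have := abs_nonneg (y i); have := abs_nonneg (f i); nlinarith
  have hnum : ∀ x : EuclideanSpace ℝ (Fin d),
      |y i - γ * x i - (1 - γ) * f i| ≤ a + γ * |x i| := by
    intro x
    have h1 := le_abs_self (x i); have h2 := neg_abs_le (x i)
    have h3 := le_abs_self (y i); have h4 := neg_abs_le (y i)
    have h5 := le_abs_self (f i); have h6 := neg_abs_le (f i)
    have h7 : γ * -|x i| ≤ γ * x i := mul_le_mul_of_nonneg_left h2 hγ0.le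
    have h8 : γ * x i ≤ γ * |x i| := mul_le_mul_of_nonneg_left h1 hγ0.le
    have h9 : (1 - γ) * -|f i| ≤ (1 - γ) * f i :=
      mul_le_mul_of_nonneg_left h6 (by linarith)
    have h10 : (1 - γ) * f i ≤ (1 - γ) * |f i| :=
      mul_le_mul_of_nonneg_left h5 (by linarith)
    rw [hadef]
    rw [abs_le]
    constructor <;> nlinarith
  have hFbound : ∀ x, ‖F x‖ ≤
      (c₁ / σ ^ 2 * (a + γ * B)) * Real.exp (-(α * ‖x‖ ^ 2)) := by
    intro x
    rw [Real.norm_eq_abs, habsF x]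
    have hxc : |x i| ≤ ‖x‖ := abs_coord_le_norm x i
    have hq2 : q₀ x ≤ c₁ * (Real.exp (-(α * ‖x‖ ^ 2)) * Real.exp (-(α * ‖x‖ ^ 2))) := by
      rw [← Real.exp_add]
      calc q₀ x ≤ c₁ * Real.exp (-c₂ * ‖x‖ ^ 2 / 2) := htail x
        _ = c₁ * Real.exp (-(α * ‖x‖ ^ 2) + -(α * ‖x‖ ^ 2)) := by
            congr 2; rw [hαdef]; ring
    have hnum' : |y i - γ * x i - (1 - γ) * f i| ≤ a + γ * ‖x‖ :=
      (hnum x).trans (by nlinarith)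
    have hte : ‖x‖ * Real.exp (-(α * ‖x‖ ^ 2)) ≤ B := t_exp_bound halpha (norm_nonneg x)
    have hmid : (a + γ * ‖x‖) * Real.exp (-(α * ‖x‖ ^ 2)) ≤ a + γ * B := by
      have hee : Real.exp (-(α * ‖x‖ ^ 2)) ≤ 1 := by
        apply Real.exp_le_one_iff.2; nlinarith [sq_nonneg ‖x‖]
      have h1 : a * Real.exp (-(α * ‖x‖ ^ 2)) ≤ a :=
        (mul_le_of_le_one_right ha0 hee)
      have h2 : γ * (‖x‖ * Real.exp (-(α * ‖x‖ ^ 2))) ≤ γ * B :=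
        mul_le_mul_of_nonneg_left hte hγ0.le
      nlinarith
    calc (|y i - γ * x i - (1 - γ) * f i| / σ ^ 2) * q₀ x * E x
        ≤ ((a + γ * ‖x‖) / σ ^ 2) *
            (c₁ * (Real.exp (-(α * ‖x‖ ^ 2)) * Real.exp (-(α * ‖x‖ ^ 2)))) * 1 := by
          have hdiv : |y i - γ * x i - (1 - γ) * f i| / σ ^ 2 ≤ (a + γ * ‖x‖) / σ ^ 2 := by
            gcongr
          exact mul_le_mul (mul_le_mul hdiv (hq2) (hq₀nn x)
            (div_nonneg (by positivity) hσ2.le)) (hEle1 x) (hEpos x).le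
            (mul_nonneg (div_nonneg (by positivity) hσ2.le) (by positivity))
      _ = (c₁ / σ ^ 2) * ((a + γ * ‖x‖) * Real.exp (-(α * ‖x‖ ^ 2))) *
            Real.exp (-(α * ‖x‖ ^ 2)) := by ring
      _ ≤ (c₁ / σ ^ 2) * (a + γ * B) * Real.exp (-(α * ‖x‖ ^ 2)) := by
          gcongr
      _ = (c₁ / σ ^ 2 * (a + γ * B)) * Real.exp (-(α * ‖x‖ ^ 2)) := by ring
  have hFint : Integrable F :=
    Integrable.mono' ((gaussInt halpha).const_mul _) hFm
      (Filter.Eventually.of_forall hFbound)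
  -- sup-norm facts
  have hsupm : Measurable fun v : EuclideanSpace ℝ (Fin d) => supNorm v := by
    unfold supNorm
    exact Measurable.iSup fun j => (hcoord j).abs
  set S : Set (EuclideanSpace ℝ (Fin d)) := {y₀ | ρ < supNorm y₀} with hSdef
  have hS : MeasurableSet S := measurableSet_lt measurable_const hsupm
  have hcs : ∀ (v : EuclideanSpace ℝ (Fin d)) (j : Fin d), |v j| ≤ supNorm v := by
    intro v j
    unfold supNorm
    exact le_ciSup (Set.Finite.bddAbove (Set.finite_range fun k => |v k|)) j
  have hsup_nn : ∀ v : EuclideanSpace ℝ (Fin d), 0 ≤ supNorm v := by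
    intro v
    unfold supNorm
    exact Real.iSup_nonneg fun j => abs_nonneg _
  set A : ℝ := supNorm y + γ * ρ + (1 - γ) * supNorm f with hAdef
  have hA0 : 0 ≤ A := by
    rw [hAdef]
    have := hsup_nn y; have := hsup_nn f
    nlinarith
  -- outside the cube: truncation hypothesis
  have hout : C * ∫ y₀ in S, |F y₀| ≤ εlow := by
    have hkey : ∀ x, C * |F x| =
        (|y i - γ * x i - (1 - γ) * f i| / σ ^ 2) * q₀ x * (C * E x) := by
      intro x; rw [habsF x]; ring
    calc C * ∫ y₀ in S, |F y₀| = ∫ y₀ in S, C * |F y₀| := (integral_const_mul _ _).symm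
      _ = ∫ y₀ in S, (|y i - γ * y₀ i - (1 - γ) * f i| / σ ^ 2) * q₀ y₀ * (C * E y₀) := by
          exact integral_congr_ae (Filter.Eventually.of_forall fun x => hkey x)
      _ ≤ εlow := htrunc i
  -- inside the cube
  have hin : ∫ y₀ in Sᶜ, |F y₀| ≤ (A / σ ^ 2) * ∫ y₀, G y₀ := by
    have hmono : ∀ x ∈ Sᶜ, |F x| ≤ (A / σ ^ 2) * G x := by
      intro x hx
      have hxρ : supNorm x ≤ ρ := not_lt.1 hx
      have hnum2 : |y i - γ * x i - (1 - γ) * f i| ≤ A := by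
        have h1 := hnum x
        have h2 : |x i| ≤ ρ := (hcs x i).trans hxρ
        have h3 := hcs y i
        have h4 := hcs f i
        rw [hAdef, hadef] at *
        have h5 : γ * |x i| ≤ γ * ρ := mul_le_mul_of_nonneg_left h2 hγ0.le
        have h6 : (1 - γ) * |f i| ≤ (1 - γ) * supNorm f :=
          mul_le_mul_of_nonneg_left h4 (by linarith)
        linarith
      rw [habsF x, hGdef]
      calc (|y i - γ * x i - (1 - γ) * f i| / σ ^ 2) * q₀ x * E x
          ≤ (A / σ ^ 2) * q₀ x * E x := by
            have h' : |y i - γ * x i - (1 - γ) * f i| / σ ^ 2 ≤ A / σ ^ 2 := by gcongr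
            exact mul_le_mul_of_nonneg_right
              (mul_le_mul_of_nonneg_right h' (hq₀nn x)) (hEpos x).le
        _ = (A / σ ^ 2) * (q₀ x * E x) := by ring
    calc ∫ y₀ in Sᶜ, |F y₀| ≤ ∫ y₀ in Sᶜ, (A / σ ^ 2) * G y₀ :=
          setIntegral_mono_on hFint.abs.integrableOn
            ((hGint.const_mul _).integrableOn) hS.compl hmono
      _ = (A / σ ^ 2) * ∫ y₀ in Sᶜ, G y₀ := integral_const_mul _ _
      _ ≤ (A / σ ^ 2) * ∫ y₀, G y₀ := by
          apply mul_le_mul_of_nonneg_left _ (by positivity)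
          exact setIntegral_le_integral hGint (Filter.Eventually.of_forall hGnn)
  -- assemble
  have hqy : q y = C * ∫ y₀, G y₀ := hq y
  have hginum : |g i| ≤ εlow + (A / σ ^ 2) * q y := by
    have h0 : g i = -(C * ∫ y₀, F y₀) := hgi i
    have h1 : |g i| = C * |∫ y₀, F y₀| := by
      rw [h0, abs_neg, abs_mul, abs_of_pos hC]
    have h2 : |∫ y₀, F y₀| ≤ ∫ y₀, |F y₀| := by
      simpa [Real.norm_eq_abs] using norm_integral_le_integral_norm F
    have h3 : (∫ y₀ in S, |F y₀|) + ∫ y₀ in Sᶜ, |F y₀| = ∫ y₀, |F y₀| :=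
      integral_add_compl hS hFint.abs
    have h4 : C * ∫ y₀ in Sᶜ, |F y₀| ≤ (A / σ ^ 2) * q y := by
      rw [hqy]
      calc C * ∫ y₀ in Sᶜ, |F y₀| ≤ C * ((A / σ ^ 2) * ∫ y₀, G y₀) :=
            mul_le_mul_of_nonneg_left hin hC.le
        _ = (A / σ ^ 2) * (C * ∫ y₀, G y₀) := by rw [mul_left_comm]
    calc |g i| = C * |∫ y₀, F y₀| := h1
      _ ≤ C * ∫ y₀, |F y₀| := mul_le_mul_of_nonneg_left h2 hC.le
      _ = (C * ∫ y₀ in S, |F y₀|) + C * ∫ y₀ in Sᶜ, |F y₀| := by rw [← h3, mul_add]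
      _ ≤ εlow + (A / σ ^ 2) * q y := add_le_add hout h4
  have hqy0 : 0 < q y := hqpos y
  rw [abs_div, abs_of_pos hqy0, div_le_iff₀ hqy0]
  have : εlow + (A / σ ^ 2) * q y ≤ (A / σ ^ 2) * q y + q y := by linarith
  have hfinal : |g i| ≤ (A / σ ^ 2 + 1) * q y := by nlinarith
  calc |g i| ≤ (A / σ ^ 2 + 1) * q y := hfinal
    _ = (A / σ ^ 2 + 1) * q y := rfl
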